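/- Let p₁ ≥ 0, p₂ ∈ ℝ, p₃ ≥ 0, p₄ ∈ ℝ, p₅ ≥ 0 with p₁ = p₅, and let q₁,q₂,q₃ ∈ ℝ. If (A₁,A₂) : ℝ → ℂ² is a differentiable solution of the system (ODE) with A₁(0) ≠ 0, then A₁(τ) ≠ 0 for all τ ∈ ℝ. -/
import Mathlib

/-- The real-valued quadratic form `V`. -/
noncomputable def Vq (q₁ q₂ q₃ : ℝ) (z₁ z₂ : ℂ) : ℝ :=
  q₁ * Complex.normSq z₁ + 2 * q₂ * ((starRingEnd ℂ) z₁ * z₂).re + q₃ * Complex.normSq z₂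

/-- The first cubic nonlinearity `F₁`. -/
noncomputable def F₁ (p₁ p₂ p₃ p₄ p₅ q₁ q₂ q₃ : ℝ) (z₁ z₂ : ℂ) : ℂ :=
  (3 * p₂ + p₃ + 2 * p₄) * Complex.normSq z₁ * z₁
  + (p₁ + p₅) * (2 * Complex.normSq z₁ * z₂ + z₁ ^ 2 * (starRingEnd ℂ) z₂)
  + (p₂ - p₃) * (2 * z₁ * Complex.normSq z₂ + (starRingEnd ℂ) z₁ * z₂ ^ 2)
  - (p₁ - p₅) * Complex.normSq z₂ * z₂
  - 4 * p₁ * (((starRingEnd ℂ) z₁ * z₂).re : ℝ) * z₁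
  + (Vq q₁ q₂ q₃ z₁ z₂ : ℝ) * z₁

/-- The second cubic nonlinearity `F₂`. -/
noncomputable def F₂ (p₁ p₂ p₃ p₄ p₅ q₁ q₂ q₃ : ℝ) (z₁ z₂ : ℂ) : ℂ :=
  (p₁ + p₅) * Complex.normSq z₁ * z₁
  + (p₂ - p₃) * (2 * Complex.normSq z₁ * z₂ + z₁ ^ 2 * (starRingEnd ℂ) z₂)
  - (p₁ - p₅) * (2 * z₁ * Complex.normSq z₂ + (starRingEnd ℂ) z₁ * z₂ ^ 2)
  + (3 * p₂ + p₃ - 2 * p₄) * Complex.normSq z₂ * z₂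
  + 4 * p₁ * (((starRingEnd ℂ) z₁ * z₂).re : ℝ) * z₂
  + (Vq q₁ q₂ q₃ z₁ z₂ : ℝ) * z₂

open Set

/-- Forward Grönwall: a function whose derivative is bounded by `K t * ‖f t‖` with `K`
continuous, vanishing at `a`, vanishes at every `b ≥ a`. -/
lemma aux_forward {f f' : ℝ → ℂ} {K : ℝ → ℝ}
    (hf : ∀ t, HasDerivAt f (f' t) t) (hK : Continuous K)
    (hb : ∀ t, ‖f' t‖ ≤ K t * ‖f t‖) {a b : ℝ} (hab : a ≤ b) (h : f a = 0) : f b = 0 := by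
  obtain ⟨C, hC⟩ := (isCompact_Icc (a := a) (b := b)).exists_bound_of_continuousOn
    hK.continuousOn
  have key := norm_le_gronwallBound_of_norm_deriv_right_le (f := f) (f' := f')
    (δ := 0) (K := C) (ε := 0) (a := a) (b := b)
    (fun t _ => (hf t).continuousAt.continuousWithinAt)
    (fun t _ => (hf t).hasDerivWithinAt)
    (by simp [h])
    (fun t ht => by
      have h1 := hb t
      have h2 : K t * ‖f t‖ ≤ C * ‖f t‖ :=
        mul_le_mul_of_nonneg_right ((le_abs_self _).trans ((Real.norm_eq_abs _) ▸ hC t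
          ⟨ht.1, ht.2.le⟩)) (norm_nonneg _)
      linarith)
  have := key b ⟨hab, le_rfl⟩
  rw [gronwallBound_ε0_δ0] at this
  exact norm_le_zero_iff.mp this

/-- Both-direction version: vanishing at `c` implies vanishing everywhere. -/
lemma aux_zero {f f' : ℝ → ℂ} {K : ℝ → ℝ}
    (hf : ∀ t, HasDerivAt f (f' t) t) (hK : Continuous K)
    (hb : ∀ t, ‖f' t‖ ≤ K t * ‖f t‖) {c : ℝ} (h : f c = 0) : ∀ t, f t = 0 := by
  intro t
  rcases le_total c t with hct | htc
  · exact aux_forward hf hK hb hct h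
  · -- reflect: g s = f (c + t - s)
    set g : ℝ → ℂ := fun s => f (c + t - s) with hg
    have hg' : ∀ s, HasDerivAt g (-(f' (c + t - s))) s := by
      intro s
      exact HasDerivAt.comp_const_sub (c + t) s (hf (c + t - s))
    have := aux_forward (f := g) (f' := fun s => -(f' (c + t - s)))
      (K := fun s => K (c + t - s)) hg'
      (hK.comp (by continuity))
      (fun s => by simpa using hb (c + t - s)) htc (by simpa [hg] using h)
    simpa [hg] using this

/-- Auxiliary factor `G`. -/
noncomputable def Gg (p₁ p₂ p₃ p₄ p₅ q₁ q₂ q₃ : ℝ) (z₁ z₂ : ℂ) : ℂ :=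
  (3 * p₂ + p₃ + 2 * p₄) * Complex.normSq z₁ + (p₁ + p₅) * (z₁ * (starRingEnd ℂ) z₂)
  + 2 * (p₂ - p₃) * Complex.normSq z₂ - 4 * p₁ * (((starRingEnd ℂ) z₁ * z₂).re : ℝ)
  + (Vq q₁ q₂ q₃ z₁ z₂ : ℝ)

/-- Auxiliary factor `H`. -/
noncomputable def Hh (p₁ p₂ p₃ p₅ : ℝ) (z₁ z₂ : ℂ) : ℂ :=
  2 * (p₁ + p₅) * (z₁ * z₂) + (p₂ - p₃) * z₂ ^ 2

attribute [local fun_prop] Complex.continuous_normSq Complex.continuous_ofReal Complex.continuous_conj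
  Complex.continuous_re

lemma F₁_factor (p₁ p₂ p₃ p₄ p₅ q₁ q₂ q₃ : ℝ) (hp : p₁ = p₅) (z₁ z₂ : ℂ) :
    F₁ p₁ p₂ p₃ p₄ p₅ q₁ q₂ q₃ z₁ z₂
      = z₁ * Gg p₁ p₂ p₃ p₄ p₅ q₁ q₂ q₃ z₁ z₂ + (starRingEnd ℂ) z₁ * Hh p₁ p₂ p₃ p₅ z₁ z₂ := by
  subst hp
  simp only [F₁, Gg, Hh, Vq, Complex.normSq_eq_conj_mul_self]
  push_cast
  ring



/-- If `p₁ = p₅`, a solution of the ODE system with `A₁ 0 ≠ 0` satisfies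
`A₁ τ ≠ 0` for every `τ`. -/
theorem stmt_15 (p₁ p₂ p₃ p₄ p₅ q₁ q₂ q₃ : ℝ)
    (hp₁ : 0 ≤ p₁) (hp₃ : 0 ≤ p₃) (hp₅ : 0 ≤ p₅) (hp₁₅ : p₁ = p₅)
    (A₁ A₂ A₁' A₂' : ℝ → ℂ)
    (hA₁ : ∀ τ, HasDerivAt A₁ (A₁' τ) τ)
    (hA₂ : ∀ τ, HasDerivAt A₂ (A₂' τ) τ)
    (hODE₁ : ∀ τ, Complex.I * A₁' τ = F₁ p₁ p₂ p₃ p₄ p₅ q₁ q₂ q₃ (A₁ τ) (A₂ τ))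
    (hODE₂ : ∀ τ, Complex.I * A₂' τ = F₂ p₁ p₂ p₃ p₄ p₅ q₁ q₂ q₃ (A₁ τ) (A₂ τ))
    (h0 : A₁ 0 ≠ 0) :
    ∀ τ : ℝ, A₁ τ ≠ 0 := by
  intro τ₀ hτ₀
  have hcA₁ : Continuous A₁ := by
    rw [continuous_iff_continuousAt]; exact fun t => (hA₁ t).continuousAt
  have hcA₂ : Continuous A₂ := by
    rw [continuous_iff_continuousAt]; exact fun t => (hA₂ t).continuousAt
  set Kf : ℝ → ℝ := fun t =>
    ‖Gg p₁ p₂ p₃ p₄ p₅ q₁ q₂ q₃ (A₁ t) (A₂ t)‖ + ‖Hh p₁ p₂ p₃ p₅ (A₁ t) (A₂ t)‖ with hKf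
  have hKcont : Continuous Kf := by
    apply Continuous.add <;> apply Continuous.norm <;>
      · simp only [Gg, Hh, Vq]
        fun_prop
  have hb : ∀ t, ‖A₁' t‖ ≤ Kf t * ‖A₁ t‖ := by
    intro t
    have h1 : ‖A₁' t‖ = ‖F₁ p₁ p₂ p₃ p₄ p₅ q₁ q₂ q₃ (A₁ t) (A₂ t)‖ := by
      rw [← hODE₁ t, norm_mul, Complex.norm_I, one_mul]
    rw [h1, F₁_factor p₁ p₂ p₃ p₄ p₅ q₁ q₂ q₃ hp₁₅]
    calc ‖A₁ t * Gg p₁ p₂ p₃ p₄ p₅ q₁ q₂ q₃ (A₁ t) (A₂ t)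
            + (starRingEnd ℂ) (A₁ t) * Hh p₁ p₂ p₃ p₅ (A₁ t) (A₂ t)‖
        ≤ ‖A₁ t * Gg p₁ p₂ p₃ p₄ p₅ q₁ q₂ q₃ (A₁ t) (A₂ t)‖
            + ‖(starRingEnd ℂ) (A₁ t) * Hh p₁ p₂ p₃ p₅ (A₁ t) (A₂ t)‖ := norm_add_le _ _
      _ = Kf t * ‖A₁ t‖ := by
          rw [norm_mul, norm_mul, RCLike.norm_conj, hKf]; ring
  have := aux_zero hA₁ hKcont hb hτ₀ 0
  exact h0 this
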